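/- For every positive integer k, |e − p_{3k−1}/q_{3k−1}| ≤ e / (4ᵏ · k!), where p_n/q_n is the n-th convergent of the continued fraction [2; 1, 2, 1, 1, 4, 1, ...]. -/

import Mathlib

open intervalIntegral

noncomputable def II (a b : ℕ) : ℝ := ∫ x in (0:ℝ)..1, x^a * (x-1)^b * Real.exp x

lemma II_cont (a b : ℕ) : Continuous (fun x : ℝ => x^a * (x-1)^b * Real.exp x) := by
  fun_prop

lemma II_intg (a b : ℕ) : IntervalIntegrable (fun x : ℝ => x^a * (x-1)^b * Real.exp x)
    MeasureTheory.volume 0 1 := (II_cont a b).intervalIntegrable _ _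

lemma II_lin1 (a b : ℕ) : II a (b+1) = II (a+1) b - II a b := by
  unfold II
  rw [← intervalIntegral.integral_sub (II_intg _ _) (II_intg _ _)]
  apply intervalIntegral.integral_congr
  intro x _
  ring

lemma II_lin2 (a b : ℕ) : II (a+1) b = II a (b+1) + II a b := by
  rw [II_lin1]; ring

lemma II_key (a b : ℕ) :
    II (a+1) (b+1) = -((a+1) * II a (b+1) + (b+1) * II (a+1) b) := by
  have hD : ∀ x ∈ Set.uIcc (0:ℝ) 1,
      HasDerivAt (fun x : ℝ => x^(a+1) * (x-1)^(b+1) * Real.exp x)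
        (((a+1:ℝ) * x^a * (x-1)^(b+1) + (b+1:ℝ) * x^(a+1) * (x-1)^b
          + x^(a+1) * (x-1)^(b+1)) * Real.exp x) x := by
    intro x _
    have h1 : HasDerivAt (fun x : ℝ => x^(a+1)) ((a+1:ℝ) * x^a) x := by
      simpa using hasDerivAt_pow (a+1) x
    have h2 : HasDerivAt (fun x : ℝ => (x-1)^(b+1)) ((b+1:ℝ) * (x-1)^b) x := by
      have := (((hasDerivAt_id x).sub_const 1).fun_pow (b+1))
      simpa using this
    have := (h1.mul h2).mul (Real.hasDerivAt_exp x)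
    exact this.congr_deriv (by simp only [Pi.mul_apply]; ring)
  have hInt : IntervalIntegrable
      (fun x : ℝ => ((a+1:ℝ) * x^a * (x-1)^(b+1) + (b+1:ℝ) * x^(a+1) * (x-1)^b
        + x^(a+1) * (x-1)^(b+1)) * Real.exp x) MeasureTheory.volume 0 1 := by
    apply Continuous.intervalIntegrable; fun_prop
  have hftc := intervalIntegral.integral_eq_sub_of_hasDerivAt hD hInt
  simp only [one_pow, zero_pow (Nat.succ_ne_zero _)] at hftc
  have hzero : (∫ x in (0:ℝ)..1,
      ((a+1:ℝ) * x^a * (x-1)^(b+1) + (b+1:ℝ) * x^(a+1) * (x-1)^b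
        + x^(a+1) * (x-1)^(b+1)) * Real.exp x) = 0 := by
    rw [hftc]; norm_num
  have hsplit : (∫ x in (0:ℝ)..1,
      ((a+1:ℝ) * x^a * (x-1)^(b+1) + (b+1:ℝ) * x^(a+1) * (x-1)^b
        + x^(a+1) * (x-1)^(b+1)) * Real.exp x)
      = (a+1:ℝ) * II a (b+1) + (b+1:ℝ) * II (a+1) b + II (a+1) (b+1) := by
    unfold II
    rw [← intervalIntegral.integral_const_mul, ← intervalIntegral.integral_const_mul,
      ← intervalIntegral.integral_add (by apply Continuous.intervalIntegrable; fun_prop)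
        (by apply Continuous.intervalIntegrable; fun_prop),
      ← intervalIntegral.integral_add (by apply Continuous.intervalIntegrable; fun_prop)
        (by apply Continuous.intervalIntegrable; fun_prop)]
    apply intervalIntegral.integral_congr
    intro x _
    ring
  rw [hsplit] at hzero
  linarith

lemma II_11 : II 1 1 = Real.exp 1 - 3 := by
  have hD : ∀ x ∈ Set.uIcc (0:ℝ) 1,
      HasDerivAt (fun x : ℝ => (x^2 - 3*x + 3) * Real.exp x)
        (x^1 * (x-1)^1 * Real.exp x) x := by
    intro x _
    have h1 : HasDerivAt (fun x : ℝ => x^2 - 3*x + 3) (2*x - 3) x := by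
      have := (((hasDerivAt_pow 2 x).sub ((hasDerivAt_id x).const_mul 3)).add_const 3)
      simpa using this
    have := h1.mul (Real.hasDerivAt_exp x)
    exact this.congr_deriv (by ring)
  have hInt : IntervalIntegrable (fun x : ℝ => x^1 * (x-1)^1 * Real.exp x)
      MeasureTheory.volume 0 1 := (II_cont 1 1).intervalIntegrable _ _
  have := intervalIntegral.integral_eq_sub_of_hasDerivAt hD hInt
  unfold II
  rw [this]
  norm_num

lemma II_21 : II 2 1 = 8 - 3 * Real.exp 1 := by
  have hD : ∀ x ∈ Set.uIcc (0:ℝ) 1,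
      HasDerivAt (fun x : ℝ => (x^3 - 4*x^2 + 8*x - 8) * Real.exp x)
        (x^2 * (x-1)^1 * Real.exp x) x := by
    intro x _
    have h1 : HasDerivAt (fun x : ℝ => x^3 - 4*x^2 + 8*x - 8)
        (3*x^2 - 8*x + 8) x := by
      have := ((((hasDerivAt_pow 3 x).sub ((hasDerivAt_pow 2 x).const_mul 4)).add
        ((hasDerivAt_id x).const_mul 8)).sub_const 8)
      exact this.congr_deriv (by push_cast; ring)
    have := h1.mul (Real.hasDerivAt_exp x)
    exact this.congr_deriv (by ring)
  have hInt : IntervalIntegrable (fun x : ℝ => x^2 * (x-1)^1 * Real.exp x)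
      MeasureTheory.volume 0 1 := (II_cont 2 1).intervalIntegrable _ _
  have := intervalIntegral.integral_eq_sub_of_hasDerivAt hD hInt
  unfold II
  rw [this]
  norm_num
  ring

lemma II_bound (k : ℕ) : |II k k| ≤ Real.exp 1 * (1/4)^k := by
  have h : ∀ x ∈ Set.uIoc (0:ℝ) 1, ‖x^k * (x-1)^k * Real.exp x‖ ≤
      (1/4)^k * Real.exp 1 := by
    intro x hx
    rw [Set.uIoc_of_le (by norm_num : (0:ℝ) ≤ 1)] at hx
    obtain ⟨hx0, hx1⟩ := hx
    rw [Real.norm_eq_abs, abs_mul, Real.abs_exp, ← mul_pow, abs_pow]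
    gcongr
    · rw [abs_le]
      constructor <;> nlinarith [sq_nonneg (x - 1/2)]
  have := intervalIntegral.norm_integral_le_of_norm_le_const h
  simp only [Real.norm_eq_abs] at this
  unfold II
  calc |∫ x in (0:ℝ)..1, x^k * (x-1)^k * Real.exp x| ≤ (1/4)^k * Real.exp 1 * |1 - 0| := this
    _ = Real.exp 1 * (1/4)^k := by norm_num; ring


theorem stmt9 (a : ℕ → ℕ) (p q : ℕ → ℤ)
    (ha1 : a 1 = 2)
    (ha3 : ∀ k : ℕ, 1 ≤ k → a (3 * k) = 2 * k)
    (ha : ∀ k : ℕ, 1 ≤ k → a (3 * k - 1) = 1 ∧ a (3 * k + 1) = 1)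
    (hp1 : p 1 = 2) (hp2 : p 2 = 3) (hq1 : q 1 = 1) (hq2 : q 2 = 1)
    (hrec : ∀ n : ℕ, 3 ≤ n →
      p n = a n * p (n - 1) + p (n - 2) ∧ q n = a n * q (n - 1) + q (n - 2))
    (k : ℕ) (hk : 1 ≤ k) :
    |Real.exp 1 - (p (3 * k - 1) : ℝ) / (q (3 * k - 1) : ℝ)| ≤
      Real.exp 1 / (4 ^ k * Nat.factorial k) := by
  -- convenient recurrence facts
  have hstep : ∀ m : ℕ, 1 ≤ m →
      p (3*m+1) = p (3*m) + p (3*m-1) ∧ q (3*m+1) = q (3*m) + q (3*m-1) ∧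
      p (3*m+2) = p (3*m+1) + p (3*m) ∧ q (3*m+2) = q (3*m+1) + q (3*m) ∧
      p (3*m+3) = (2*m+2) * p (3*m+2) + p (3*m+1) ∧
      q (3*m+3) = (2*m+2) * q (3*m+2) + q (3*m+1) := by
    intro m hm
    have h1 := hrec (3*m+1) (by omega)
    have h2 := hrec (3*m+2) (by omega)
    have h3 := hrec (3*m+3) (by omega)
    have ha1' : a (3*m+1) = 1 := (ha m hm).2
    have ha2' : a (3*m+2) = 1 := by
      have := (ha (m+1) (by omega)).1
      have e : 3*(m+1) - 1 = 3*m+2 := by omega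
      rwa [e] at this
    have ha3' : a (3*m+3) = 2*m+2 := by
      have := ha3 (m+1) (by omega)
      have e : 3*(m+1) = 3*m+3 := by omega
      rw [e] at this; omega
    have e1 : 3*m+1-1 = 3*m := by omega
    have e2 : 3*m+1-2 = 3*m-1 := by omega
    have e3 : 3*m+2-1 = 3*m+1 := by omega
    have e4 : 3*m+2-2 = 3*m := by omega
    have e5 : 3*m+3-1 = 3*m+2 := by omega
    have e6 : 3*m+3-2 = 3*m+1 := by omega
    rw [e1, e2, ha1'] at h1
    rw [e3, e4, ha2'] at h2
    rw [e5, e6, ha3'] at h3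
    refine ⟨by rw [h1.1]; push_cast; ring, by rw [h1.2]; push_cast; ring,
      by rw [h2.1]; push_cast; ring, by rw [h2.2]; push_cast; ring,
      by rw [h3.1]; push_cast; ring, by rw [h3.2]; push_cast; ring⟩
  -- positivity of q
  have hqpos : ∀ n : ℕ, 1 ≤ n → 1 ≤ q n := by
    intro n
    induction n using Nat.strong_induction_on with
    | _ n ih =>
      intro hn
      rcases Nat.lt_or_ge n 3 with h3 | h3
      · interval_cases n
        · omega
        · omega
      · have h := (hrec n h3).2
        have hq2' : 1 ≤ q (n-2) := ih (n-2) (by omega) (by omega)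
        have hq1' : 1 ≤ q (n-1) := ih (n-1) (by omega) (by omega)
        have : (0:ℤ) ≤ (a n : ℤ) * q (n-1) := by positivity
        omega
  -- main induction
  have main : ∀ n : ℕ,
      II (n+1) (n+1) = (Nat.factorial (n+1) : ℝ) *
        ((q (3*n+2) : ℝ) * Real.exp 1 - (p (3*n+2) : ℝ)) ∧
      II (n+2) (n+1) = (Nat.factorial (n+1) : ℝ) *
        ((p (3*n+3) : ℝ) - (q (3*n+3) : ℝ) * Real.exp 1) := by
    intro n
    induction n with
    | zero =>
      have h3 := hrec 3 (le_refl 3)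
      have ha3' : a 3 = 2 := by simpa using ha3 1 le_rfl
      rw [ha3'] at h3
      have hp3 : p 3 = 8 := by have := h3.1; simp at this; omega
      have hq3 : q 3 = 3 := by have := h3.2; simp at this; omega
      constructor
      · rw [II_11]
        simp [hp2, hq2, Nat.factorial]
      · rw [II_21]
        simp [hp3, hq3, Nat.factorial]
    | succ n ihn =>
      obtain ⟨ihA, ihB⟩ := ihn
      obtain ⟨hp1', hq1', hp2', hq2', hp3', hq3'⟩ := hstep (n+1) (by omega)
      have e0 : 3*(n+1)-1 = 3*n+2 := by omega
      have e1 : 3*(n+1) = 3*n+3 := by omega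
      have e2 : 3*(n+1)+1 = 3*n+4 := by omega
      have e3 : 3*(n+1)+2 = 3*n+5 := by omega
      have e4 : 3*(n+1)+3 = 3*n+6 := by omega
      rw [e2, e1] at hp1' hq1'
      have e0' : 3*n+3-1 = 3*n+2 := by omega
      rw [e0'] at hp1' hq1'
      rw [e3, e2, e1] at hp2' hq2'
      rw [e4, e3, e2] at hp3' hq3'
      have en2 : n+1+1 = n+2 := by omega
      have en3 : n+1+2 = n+3 := by omega
      -- analytic recurrences
      have hA : II (n+2) (n+2) = ((n:ℝ)+2) * (II (n+1) (n+1) - 2 * II (n+2) (n+1)) := by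
        have hk1 := II_key (n+1) (n+1)
        have hl := II_lin1 (n+1) (n+1)
        rw [hl] at hk1
        rw [hk1]; push_cast; ring
      have hB : II (n+3) (n+2) =
          -((2*(n:ℝ)+5) * II (n+2) (n+2)) - ((n:ℝ)+2) * II (n+2) (n+1) := by
        have hk2 := II_key (n+2) (n+1)
        rw [II_lin2 (n+2) (n+1)] at hk2
        simp only [show n+1+1 = n+2 from rfl, show n+2+1 = n+3 from rfl] at hk2
        rw [hk2, hA]; push_cast; ring
      have hfact : (Nat.factorial (n+2) : ℝ) = ((n:ℝ)+2) * (Nat.factorial (n+1) : ℝ) := by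
        rw [Nat.factorial_succ]; push_cast; ring
      have hq5 : (q (3*n+5) : ℝ) = 2*(q (3*n+3):ℝ) + (q (3*n+2):ℝ) := by
        rw [hq2', hq1']; push_cast; ring
      have hp5 : (p (3*n+5) : ℝ) = 2*(p (3*n+3):ℝ) + (p (3*n+2):ℝ) := by
        rw [hp2', hp1']; push_cast; ring
      have hq4 : (q (3*n+4) : ℝ) = (q (3*n+3):ℝ) + (q (3*n+2):ℝ) := by
        rw [hq1']; push_cast; ring
      have hp4 : (p (3*n+4) : ℝ) = (p (3*n+3):ℝ) + (p (3*n+2):ℝ) := by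
        rw [hp1']; push_cast; ring
      have hq6 : (q (3*n+6) : ℝ) = (2*(n:ℝ)+4) * (q (3*n+5):ℝ) + (q (3*n+4):ℝ) := by
        rw [hq3']; push_cast; ring
      have hp6 : (p (3*n+6) : ℝ) = (2*(n:ℝ)+4) * (p (3*n+5):ℝ) + (p (3*n+4):ℝ) := by
        rw [hp3']; push_cast; ring
      constructor
      · rw [en2, e3, hA, ihA, ihB, hfact, hq5, hp5]; ring
      · rw [en3, en2, e4, hB, hA, ihA, ihB, hfact, hq6, hp6, hq4, hp4, hq5, hp5]; ring
  -- conclusion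
  obtain ⟨m, rfl⟩ : ∃ m, k = m + 1 := ⟨k - 1, by omega⟩
  have e0 : 3*(m+1) - 1 = 3*m+2 := by omega
  rw [e0]
  obtain ⟨hA, -⟩ := main m
  have hq : (1:ℝ) ≤ (q (3*m+2) : ℝ) := by
    exact_mod_cast hqpos (3*m+2) (by omega)
  have hq0 : (0:ℝ) < (q (3*m+2) : ℝ) := by linarith
  have hf0 : (0:ℝ) < (Nat.factorial (m+1) : ℝ) := by
    exact_mod_cast Nat.factorial_pos (m+1)
  have heq : Real.exp 1 - (p (3*m+2) : ℝ) / (q (3*m+2) : ℝ) =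
      II (m+1) (m+1) / ((Nat.factorial (m+1) : ℝ) * (q (3*m+2) : ℝ)) := by
    rw [hA]
    field_simp
  rw [heq, abs_div,
    abs_of_pos (by positivity : (0:ℝ) < (Nat.factorial (m+1) : ℝ) * (q (3*m+2) : ℝ))]
  have hb := II_bound (m+1)
  have hexp : (0:ℝ) < Real.exp 1 := Real.exp_pos 1
  rw [div_le_div_iff₀ (by positivity) (by positivity)]
  calc |II (m+1) (m+1)| * (4 ^ (m+1) * (Nat.factorial (m+1) : ℝ))
      ≤ (Real.exp 1 * (1/4)^(m+1)) * (4 ^ (m+1) * (Nat.factorial (m+1) : ℝ)) := by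
        apply mul_le_mul_of_nonneg_right hb; positivity
    _ = Real.exp 1 * (Nat.factorial (m+1) : ℝ) := by
        rw [div_pow, one_pow]
        field_simp
    _ ≤ Real.exp 1 * ((Nat.factorial (m+1) : ℝ) * (q (3*m+2) : ℝ)) := by
        apply mul_le_mul_of_nonneg_left _ (le_of_lt hexp)
        nlinarith
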